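/- Let 𝓕 be a finite set of finite simple graphs, G a finite simple graph, S ⊆ V(G) nonempty, T ⊆ V(G) \ S, and k a natural number. Suppose that (a) there is no tight enrichment U ⊆ V(G) \ (S ∪ T) of S with respect to 𝓕 such that every connected component of G[U] is adjacent to a vertex of S; let 𝒰 be the collection of all connected sets U ⊆ V(G) \ (S ∪ T) that are tight enrichments of S with respect to 𝓕, and let V(𝒰) be their union. Suppose further that (b) P is a minimum-size left-restricted (S, T ∪ V(𝒰))-separator whose size equals λ^L_G(S,T), and set S' = R_G(S,P). Then for every vertex set C with S ⊆ C ⊆ V(G) \ T such that G[C] is connected, 𝓕-free, and |N_G(C)| ≤ k, the set C ∪ S' also satisfies S ⊆ C ∪ S' ⊆ V(G) \ T, G[C ∪ S'] is connected and 𝓕-free, and |N_G(C ∪ S')| ≤ |N_G(C)| ≤ k. Consequently, every set that is seclusion-maximal with respect to the property "connected, 𝓕-free, k-secluded, and S ⊆ C ⊆ V(G) \ T" contains S'. -/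

import Mathlib

open SimpleGraph

/-- The open neighborhood of a vertex set `C` in a graph `G`. -/
def openNbhd {V : Type} (G : SimpleGraph V) (C : Set V) : Set V :=
  {v | v ∉ C ∧ ∃ u ∈ C, G.Adj u v}

/-- `C` is seclusion-maximal for property `Pr`. -/
def SeclusionMaximal {V : Type} (G : SimpleGraph V) (Pr : Set V → Prop) (C : Set V) : Prop :=
  Pr C ∧ ∀ C' : Set V, C ⊂ C' → Pr C' → (openNbhd G C).ncard < (openNbhd G C').ncard

/-- `u` can reach `v` in `G` by a walk whose support stays inside `A`. -/
def ReachIn {V : Type} (G : SimpleGraph V) (A : Set V) (u v : V) : Prop :=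
  ∃ w : G.Walk u v, ∀ x ∈ w.support, x ∈ A

/-- The set of vertices reachable in `G − P` from a vertex of `S \ P`. -/
def reachSet {V : Type} (G : SimpleGraph V) (S P : Set V) : Set V :=
  {v | ∃ s ∈ S \ P, ReachIn G Pᶜ s v}

/-- `P` is an unrestricted `(S,T)`-separator: no vertex of `S \ P` reaches a
vertex of `T \ P` in `G − P`. -/
def IsSep {V : Type} (G : SimpleGraph V) (S T P : Set V) : Prop :=
  ∀ s ∈ S \ P, ∀ t ∈ T \ P, ¬ ReachIn G Pᶜ s t

/-- A left-restricted `(S,T)`-separator additionally avoids `S`. -/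
def IsLeftSep {V : Type} (G : SimpleGraph V) (S T P : Set V) : Prop :=
  IsSep G S T P ∧ P ∩ S = ∅

/-- A minimum-size left-restricted `(S,T)`-separator. -/
def IsMinLeftSep {V : Type} (G : SimpleGraph V) (S T P : Set V) : Prop :=
  IsLeftSep G S T P ∧ ∀ Q : Set V, IsLeftSep G S T Q → P.ncard ≤ Q.ncard

/-- `λ^L_G(S,T)`: the minimum size of a left-restricted `(S,T)`-separator,
`⊤` (i.e. `+∞`) if none exists. -/
noncomputable def lamL {V : Type} (G : SimpleGraph V) (S T : Set V) : ℕ∞ :=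
  ⨅ (P : Set V) (_ : IsLeftSep G S T P), (P.ncard : ℕ∞)

/-- `D` is a union of connected components of `H`. -/
def ComponentClosed {W : Type} (H : SimpleGraph W) (D : Set W) : Prop :=
  ∀ x ∈ D, ∀ y : W, H.Reachable x y → y ∈ D

/-- `U` is a tight enrichment of `S` with respect to the family `Gf`: there is a
partial forbidden graph (an induced subgraph of some `Gf i` on a union `D` of its
connected components) and an induced-subgraph embedding `φ` of it into `G` with
`U = φ(D) \ S`, such that `G[S]` contains no induced copy of that partial
forbidden graph. -/
def TightEnrichment {V : Type} {ι : Type} {Fv : ι → Type}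
    (Gf : ∀ i, SimpleGraph (Fv i)) (G : SimpleGraph V) (S U : Set V) : Prop :=
  ∃ (i : ι) (D : Set (Fv i)) (φ : ((Gf i).induce D) ↪g G),
    ComponentClosed (Gf i) D ∧
    U = Set.range (fun d : ↥D => φ d) \ S ∧
    IsEmpty (((Gf i).induce D) ↪g (G.induce S))

section Helpers

variable {V : Type} {G : SimpleGraph V} {A B P S T : Set V} {u v w : V}

lemma reachIn_refl (h : u ∈ A) : ReachIn G A u u :=
  ⟨Walk.nil, by simpa using h⟩

lemma ReachIn.end_mem (h : ReachIn G A u v) : v ∈ A := by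
  obtain ⟨w, hw⟩ := h
  exact hw v w.end_mem_support

lemma ReachIn.concat (h : ReachIn G A u v) (hadj : G.Adj v w) (hw : w ∈ A) :
    ReachIn G A u w := by
  obtain ⟨p, hp⟩ := h
  refine ⟨p.concat hadj, ?_⟩
  intro x hx
  rw [Walk.support_concat, List.mem_append, List.mem_singleton] at hx
  rcases hx with h1 | h2
  · exact hp x h1
  · exact h2 ▸ hw

/-- All vertices on the witnessing walk are themselves reachable. -/
lemma ReachIn.of_mem_support {p : G.Walk u v} (hp : ∀ x ∈ p.support, x ∈ A)
    {x : V} (hx : x ∈ p.support) : ReachIn G A u x := by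
  classical
  exact ⟨p.takeUntil x hx, fun y hy => hp y (Walk.support_takeUntil_subset _ hx hy)⟩

/-- Transfer a walk staying inside `A` to reachability in the induced graph. -/
lemma induce_reachable_of_walk :
    ∀ {u v : V} (p : G.Walk u v), (∀ x ∈ p.support, x ∈ A) →
      ∀ (hu : u ∈ A) (hv : v ∈ A), (G.induce A).Reachable ⟨u, hu⟩ ⟨v, hv⟩ := by
  intro u v p
  induction p with
  | nil => intro _ hu hv; rfl
  | @cons a b c h q ih =>
    intro hp hu hv
    have hb : b ∈ A := hp b (by simp)
    have hadj : (G.induce A).Adj ⟨a, hu⟩ ⟨b, hb⟩ := by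
      simp only [comap_adj, Function.Embedding.coe_subtype]
      exact h
    exact hadj.reachable.trans (ih (fun x hx => hp x (by simp [hx])) hb hv)

/-- First exit edge of a walk leaving a set `M`. -/
lemma exists_exit {M : Set V} :
    ∀ {a b : V} (p : G.Walk a b), a ∈ M → b ∉ M →
      ∃ x y, x ∈ M ∧ y ∉ M ∧ G.Adj x y ∧ y ∈ p.support := by
  intro a b p
  induction p with
  | nil => intro ha hb; exact absurd ha hb
  | @cons a c b h q ih =>
    intro ha hb
    by_cases hc : c ∈ M
    · obtain ⟨x, y, h1, h2, h3, h4⟩ := ih hc hb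
      exact ⟨x, y, h1, h2, h3, by simp [h4]⟩
    · exact ⟨a, c, ha, hc, h, by simp⟩

/-- Walk closure for adjacency-closed sets. -/
lemma mem_of_walk_closed {W : Type} {F : SimpleGraph W} {D : Set W}
    (hD : ∀ x ∈ D, ∀ y, F.Adj x y → y ∈ D) :
    ∀ {a b : W}, F.Reachable a b → a ∈ D → b ∈ D := by
  intro a b h ha
  obtain ⟨p⟩ := h
  induction p with
  | nil => exact ha
  | @cons a c b h q ih => exact ih (hD _ ha _ h) 

/-- Monotone embedding between induced subgraphs. -/
def induceEmbMono (h : A ⊆ B) : G.induce A ↪g G.induce B where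
  toFun := fun x => ⟨x.1, h x.2⟩
  inj' := by
    intro x y hxy
    simp only [Subtype.mk.injEq] at hxy
    exact Subtype.ext hxy
  map_rel_iff' := by
    intro x y
    simp [comap_adj]
    exact Iff.rfl

/-- The open neighborhood of a connected-ish superset of `S` avoiding `T` is a
left-restricted `(S,T)`-separator. -/
lemma openNbhd_isLeftSep (hSC : S ⊆ B) (hBT : ∀ x ∈ B, x ∉ T) :
    IsLeftSep G S T (openNbhd G B) := by
  constructor
  · rintro s ⟨hs, -⟩ t ⟨ht, -⟩ ⟨p, hp⟩
    have hbt : t ∉ B := fun hc => hBT t hc ht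
    obtain ⟨x, y, hx, hy, hadj, hysupp⟩ := exists_exit p (hSC hs) hbt
    exact (hp y hysupp) ⟨hy, x, hx, hadj⟩
  · ext x
    simp only [Set.mem_inter_iff, Set.mem_empty_iff_false, iff_false, not_and]
    intro hx hs
    exact hx.1 (hSC hs)

end Helpers

section ReachSetFacts

variable {V : Type} {G : SimpleGraph V} {S P : Set V}

lemma subset_reachSet (hPS : P ∩ S = ∅) : S ⊆ reachSet G S P := by
  intro s hs
  have hsP : s ∉ P := fun hc => by
    have : s ∈ P ∩ S := ⟨hc, hs⟩
    simp [hPS] at this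
  exact ⟨s, ⟨hs, hsP⟩, reachIn_refl hsP⟩

lemma reachSet_not_mem_P {v : V} (hv : v ∈ reachSet G S P) : v ∉ P := by
  obtain ⟨s, _, hr⟩ := hv
  exact hr.end_mem

lemma reachSet_closed {v w : V} (hv : v ∈ reachSet G S P) (hadj : G.Adj v w)
    (hw : w ∉ P) : w ∈ reachSet G S P := by
  obtain ⟨s, hs, hr⟩ := hv
  exact ⟨s, hs, hr.concat hadj hw⟩

lemma openNbhd_reachSet_subset (G : SimpleGraph V) (S P : Set V) :
    openNbhd G (reachSet G S P) ⊆ P := by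
  rintro v ⟨hv, u, hu, hadj⟩
  by_contra hvP
  exact hv (reachSet_closed hu hadj hvP)

end ReachSetFacts

section FfreeCore

variable {V ι : Type} [Fintype V] {Fv : ι → Type} [∀ i, Fintype (Fv i)]

/-- An embedding out of an induced subgraph on the empty set always exists. -/
noncomputable def embOfEmptySet {W V' : Type} (F : SimpleGraph W) (H : SimpleGraph V') :
    (F.induce (∅ : Set W)) ↪g H where
  toFun := fun x => absurd x.2 (Set.notMem_empty x.1)
  inj' := fun x => absurd x.2 (Set.notMem_empty x.1)
  map_rel_iff' := by
    intro x
    exact absurd x.2 (Set.notMem_empty x.1)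

/-- Core induction for `𝓕`-freeness of `C ∪ S'`. -/
lemma ffree_ind (Gf : ∀ i, SimpleGraph (Fv i)) (G : SimpleGraph V)
    (S T C S' : Set V) (i : ι)
    (hSC : S ⊆ C) (hCT : C ⊆ Tᶜ) (hS'T : ∀ x ∈ S', x ∉ T)
    (hS'U : ∀ U' : Set V, U' ⊆ (S ∪ T)ᶜ → TightEnrichment Gf G S U' →
        (G.induce U').Connected → ∀ x ∈ U', x ∉ S')
    (ha : ¬ ∃ U : Set V, U ⊆ (S ∪ T)ᶜ ∧ TightEnrichment Gf G S U ∧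
        ∀ u ∈ U, ∃ u' : V, ReachIn G U u u' ∧ ∃ s ∈ S, G.Adj u' s)
    (hCfree : IsEmpty ((Gf i) ↪g (G.induce C)))
    (ψ : (Gf i) ↪g G) (hψ : ∀ x, ψ x ∈ C ∪ S') :
    ∀ n (D : Set (Fv i)), D.ncard ≤ n → ComponentClosed (Gf i) D →
      IsEmpty ((Gf i).induce D ↪g G.induce S) →
      (∀ x, x ∉ D → ψ x ∈ C ∧ ψ x ∉ S ∧ ∀ s ∈ S, ¬ G.Adj (ψ x) s) → False := by
  classical
  have key : ∀ U : Set V, U ⊆ (S ∪ T)ᶜ → TightEnrichment Gf G S U →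
      ∃ u ∈ U, ∀ u', ReachIn G U u u' → ∀ s ∈ S, ¬ G.Adj u' s := by
    intro U h1 h2
    by_contra hc
    push_neg at hc
    exact ha ⟨U, h1, h2, fun u hu => by
      obtain ⟨u', hr, s, hs, hadj⟩ := hc u hu
      exact ⟨u', hr, s, hs, hadj⟩⟩
  intro n
  induction n with
  | zero =>
    intro D hcard _ hDS _
    have hD : D = ∅ := Set.ncard_eq_zero (Set.toFinite D) |>.mp (Nat.le_zero.mp hcard)
    subst hD
    exact hDS.false (embOfEmptySet _ _)
  | succ n ih =>
    intro D hcard hCC hDS houter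
    by_cases hDemp : D = ∅
    · subst hDemp
      exact hDS.false (embOfEmptySet _ _)
    -- choose a minimal component-closed D' ⊆ D with no embedding into G[S]
    set 𝒮 : Set (Set (Fv i)) :=
      {E | E ⊆ D ∧ ComponentClosed (Gf i) E ∧ IsEmpty ((Gf i).induce E ↪g G.induce S)} with h𝒮
    have hDin : D ∈ 𝒮 := ⟨subset_rfl, hCC, hDS⟩
    obtain ⟨D', hD'min⟩ := (Set.toFinite 𝒮).exists_minimal ⟨D, hDin⟩
    have hD'mem : D' ∈ 𝒮 := hD'min.prop
    have hmin : ∀ E ∈ 𝒮, E ≤ D' → D' = E := fun E hE hle => (hD'min.eq_of_le hE hle).symm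
    obtain ⟨hD'sub, hD'CC, hD'S⟩ := hD'mem
    -- the tight enrichment U
    set U : Set V := Set.range (fun d : ↥D' => ψ d.1) \ S with hU
    let φ' : ((Gf i).induce D') ↪g G :=
      { toFun := fun d => ψ d.1
        inj' := fun a b h => Subtype.ext (ψ.injective h)
        map_rel_iff' := by
          intro a b
          exact ψ.map_rel_iff }
    have hUrange : U = Set.range (fun d : ↥D' => φ' d) \ S := hU
    have hUmem : ∀ x ∈ U, ∃ k, k ∈ D' ∧ ψ k = x ∧ x ∉ S := by
      rintro x ⟨⟨k, hk⟩, hxS⟩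
      exact ⟨k.1, k.2, hk, hxS⟩
    have hUsub : U ⊆ (S ∪ T)ᶜ := by
      intro x hxU
      obtain ⟨k, hkD, hkx, hxS⟩ := hUmem x hxU
      intro hc
      rcases hc with hc | hc
      · exact hxS hc
      · rcases hkx ▸ hψ k with h1 | h1
        · exact (hCT h1) hc
        · exact hS'T x h1 hc
    have hTE : TightEnrichment Gf G S U := ⟨i, D', φ', hD'CC, hUrange, hD'S⟩
    obtain ⟨u, hu, hno⟩ := key U hUsub hTE
    -- U₀: the component of u in G[U]
    set U₀ : Set V := {x | ReachIn G U u x} with hU₀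
    have hU₀U : U₀ ⊆ U := fun x hx => hx.end_mem
    have huU₀ : u ∈ U₀ := reachIn_refl hu
    have hU₀S : ∀ x ∈ U₀, ∀ s ∈ S, ¬ G.Adj x s := fun x hx s hs => hno x hx s hs
    have hU₀nS : ∀ x ∈ U₀, x ∉ S := fun x hx => (hUmem x (hU₀U hx)).choose_spec.2.2
    have hU₀closed : ∀ x ∈ U₀, ∀ y, G.Adj x y → y ∈ U → y ∈ U₀ :=
      fun x hx y hxy hy => hx.concat hxy hy
    -- D₀: the preimage of U₀
    set D₀ : Set (Fv i) := {k | k ∈ D' ∧ ψ k ∈ U₀} with hD₀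
    have hD₀sub : D₀ ⊆ D' := fun k hk => hk.1
    have hU₀img : ∀ x ∈ U₀, ∃ k ∈ D₀, ψ k = x := by
      intro x hx
      obtain ⟨k, hk, hkx, -⟩ := hUmem x (hU₀U hx)
      exact ⟨k, ⟨hk, hkx ▸ hx⟩, hkx⟩
    have hD₀adj : ∀ k ∈ D₀, ∀ l, (Gf i).Adj k l → l ∈ D₀ := by
      rintro k ⟨hk1, hk2⟩ l hkl
      have hl1 : l ∈ D' := hD'CC k hk1 l hkl.reachable
      have hGadj : G.Adj (ψ k) (ψ l) := ψ.map_rel_iff.mpr hkl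
      have hlS : ψ l ∉ S := by
        intro hc
        exact hU₀S (ψ k) hk2 (ψ l) hc hGadj
      have hlU : ψ l ∈ U := ⟨⟨⟨l, hl1⟩, rfl⟩, hlS⟩
      exact ⟨hl1, hU₀closed (ψ k) hk2 (ψ l) hGadj hlU⟩
    have hD₀CC : ComponentClosed (Gf i) D₀ :=
      fun x hx y hxy => mem_of_walk_closed hD₀adj hxy hx
    obtain ⟨k₀, hk₀, hk₀u⟩ := hU₀img u huU₀
    have hD₀ne : D₀ ≠ ∅ := fun hc => by rw [hc] at hk₀; exact hk₀
    have hψD₀ : ∀ k ∈ D₀, ψ k ∈ U₀ := fun k hk => hk.2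
    -- connectivity of G[U₀]
    have hreachU₀ : ∀ (x : V) (hx : x ∈ U₀),
        (G.induce U₀).Reachable ⟨u, huU₀⟩ ⟨x, hx⟩ := by
      intro x hx
      obtain ⟨p, hp⟩ := id hx
      have hsupp : ∀ y ∈ p.support, y ∈ U₀ := fun y hy => ReachIn.of_mem_support hp hy
      exact induce_reachable_of_walk p hsupp huU₀ hx
    have hconn : (G.induce U₀).Connected := by
      rw [connected_iff]
      refine ⟨?_, ⟨⟨u, huU₀⟩⟩⟩
      rintro ⟨x, hx⟩ ⟨y, hy⟩
      exact (hreachU₀ x hx).symm.trans (hreachU₀ y hy)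
    -- U₀ is a connected tight enrichment, hence avoids S'
    have hTE₀ : TightEnrichment Gf G S U₀ := by
      by_cases hD₀eq : D₀ = D'
      · have hUeq : U₀ = U := by
          refine subset_antisymm hU₀U ?_
          rintro x ⟨⟨k, hk⟩, hxS⟩
          have hmem : k.1 ∈ D₀ := by rw [hD₀eq]; exact k.2
          exact hk ▸ hmem.2
        rw [hUeq]
        exact hTE
      · -- glue an embedding of D'\D₀ into G[S] with ψ on D₀
        have hproper : D' \ D₀ ≠ D' := by
          intro hc
          have : k₀ ∈ D' \ D₀ := hc.symm ▸ hD₀sub hk₀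
          exact this.2 hk₀
        have hDCCdiff : ComponentClosed (Gf i) (D' \ D₀) := by
          rintro x ⟨hx1, hx2⟩ y hxy
          refine ⟨hD'CC x hx1 y hxy, fun hc => hx2 (hD₀CC y hc x hxy.symm)⟩
        have hne : Nonempty ((Gf i).induce (D' \ D₀) ↪g G.induce S) := by
          by_contra hc
          have hmem : D' \ D₀ ∈ 𝒮 :=
            ⟨(Set.diff_subset).trans hD'sub, hDCCdiff, not_nonempty_iff.mp hc⟩
          exact hproper (hmin _ hmem Set.diff_subset).symm
        obtain ⟨θ⟩ := hne
        have hcross : ∀ k, k ∈ D₀ → ∀ s ∈ S, ¬ G.Adj (ψ k) s :=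
          fun k hk s hs => hU₀S (ψ k) hk.2 s hs
        refine ⟨i, D', {
          toFun := fun d => if h : d.1 ∈ D₀ then ψ d.1 else (θ ⟨d.1, Set.mem_diff_of_mem d.2 h⟩ : V)
          inj' := ?_
          map_rel_iff' := ?_ }, hD'CC, ?_, hD'S⟩
        · rintro ⟨a, haD⟩ ⟨b, hbD⟩ hab
          simp only at hab
          by_cases h1 : a ∈ D₀ <;> by_cases h2 : b ∈ D₀
          · rw [dif_pos h1, dif_pos h2] at hab
            exact Subtype.ext (ψ.injective hab)
          · rw [dif_pos h1, dif_neg h2] at hab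
            exact absurd ((θ ⟨b, hbD, h2⟩).2) (hab ▸ hU₀nS (ψ a) (hψD₀ a h1))
          · rw [dif_neg h1, dif_pos h2] at hab
            exact absurd ((θ ⟨a, haD, h1⟩).2) (hab.symm ▸ hU₀nS (ψ b) (hψD₀ b h2))
          · rw [dif_neg h1, dif_neg h2] at hab
            have h3 := θ.injective (Subtype.ext hab)
            have h4 := Subtype.ext_iff.mp h3
            exact Subtype.ext h4
        · rintro ⟨a, haD⟩ ⟨b, hbD⟩
          show G.Adj (if h : a ∈ D₀ then ψ a else (θ ⟨a, Set.mem_diff_of_mem haD h⟩ : V))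
            (if h : b ∈ D₀ then ψ b else (θ ⟨b, Set.mem_diff_of_mem hbD h⟩ : V)) ↔ (Gf i).Adj a b
          by_cases h1 : a ∈ D₀ <;> by_cases h2 : b ∈ D₀
          · rw [dif_pos h1, dif_pos h2]
            exact ψ.map_rel_iff
          · rw [dif_pos h1, dif_neg h2]
            constructor
            · intro hadj
              exact absurd hadj (hcross a h1 _ (θ ⟨b, hbD, h2⟩).2)
            · intro hadj
              exact absurd (hD₀adj a h1 b hadj) h2
          · rw [dif_neg h1, dif_pos h2]
            constructor
            · intro hadj
              exact absurd hadj.symm (hcross b h2 _ (θ ⟨a, haD, h1⟩).2)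
            · intro hadj
              exact absurd (hD₀adj b h2 a hadj.symm) h1
          · rw [dif_neg h1, dif_neg h2]
            have := θ.map_rel_iff (a := ⟨a, haD, h1⟩) (b := ⟨b, hbD, h2⟩)
            simpa [comap_adj] using this
        · -- range computation
          ext x
          simp only [Set.mem_diff, Set.mem_range, RelEmbedding.coe_mk,
            Function.Embedding.coeFn_mk]
          constructor
          · intro hx
            refine ⟨?_, hU₀nS x hx⟩
            obtain ⟨k, hk, hkx⟩ := hU₀img x hx
            exact ⟨⟨k, hD₀sub hk⟩, by show (if h : k ∈ D₀ then ψ k else (θ ⟨k, Set.mem_diff_of_mem (hD₀sub hk) h⟩ : V)) = x; rw [dif_pos hk]; exact hkx⟩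
          · rintro ⟨⟨⟨k, hkD⟩, hkx⟩, hxS⟩
            change (if h : k ∈ D₀ then ψ k else (θ ⟨k, Set.mem_diff_of_mem hkD h⟩ : V)) = x at hkx
            by_cases h1 : k ∈ D₀
            · rw [dif_pos h1] at hkx
              exact hkx ▸ hψD₀ k h1
            · rw [dif_neg h1] at hkx
              exact absurd (hkx ▸ (θ ⟨k, hkD, h1⟩).2) hxS
    have hU₀sub : U₀ ⊆ (S ∪ T)ᶜ := hU₀U.trans hUsub
    have hU₀S' : ∀ x ∈ U₀, x ∉ S' := hS'U U₀ hU₀sub hTE₀ hconn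
    have hU₀C : U₀ ⊆ C := by
      intro x hx
      obtain ⟨k, hk, hkx, -⟩ := hUmem x (hU₀U hx)
      rcases hkx ▸ hψ k with h1 | h1
      · exact h1
      · exact absurd h1 (hU₀S' x hx)
    -- the new outer condition
    have hO : ∀ x, x ∉ D \ D₀ → ψ x ∈ C ∧ ψ x ∉ S ∧ ∀ s ∈ S, ¬ G.Adj (ψ x) s := by
      intro x hx
      by_cases hxD : x ∈ D
      · have hxD₀ : x ∈ D₀ := by
          by_contra hc
          exact hx ⟨hxD, hc⟩
        exact ⟨hU₀C (hψD₀ x hxD₀), hU₀nS _ (hψD₀ x hxD₀),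
          fun s hs => hU₀S _ (hψD₀ x hxD₀) s hs⟩
      · exact houter x hxD
    -- if D\D₀ embeds into G[S], build a full copy of Gf i inside C : contradiction
    have hDS' : IsEmpty ((Gf i).induce (D \ D₀) ↪g G.induce S) := by
      by_contra hc
      obtain ⟨θ⟩ := not_isEmpty_iff.mp hc
      have hΦ : (Gf i) ↪g G.induce C := {
        toFun := fun x => if h : x ∈ D \ D₀ then ⟨(θ ⟨x, h⟩ : V), hSC (θ ⟨x, h⟩).2⟩
          else ⟨ψ x, (hO x h).1⟩
        inj' := by
          intro a b hab
          simp only [Function.Embedding.coeFn_mk] at hab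
          by_cases h1 : a ∈ D \ D₀ <;> by_cases h2 : b ∈ D \ D₀
          · simp only [dif_pos h1, dif_pos h2, Subtype.mk.injEq] at hab
            have h3 := θ.injective (Subtype.ext hab)
            have h4 := Subtype.ext_iff.mp h3
            exact h4
          · simp only [dif_pos h1, dif_neg h2, Subtype.mk.injEq] at hab
            exact absurd (hab ▸ (θ ⟨a, h1⟩).2) (hO b h2).2.1
          · simp only [dif_neg h1, dif_pos h2, Subtype.mk.injEq] at hab
            exact absurd (hab.symm ▸ (θ ⟨b, h2⟩).2) (hO a h1).2.1
          · simp only [dif_neg h1, dif_neg h2, Subtype.mk.injEq] at hab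
            exact ψ.injective hab
        map_rel_iff' := by
          intro a b
          show G.Adj ((if h : a ∈ D \ D₀ then ⟨(θ ⟨a, h⟩ : V), hSC (θ ⟨a, h⟩).2⟩ else ⟨ψ a, (hO a h).1⟩ : ↥C) : V)
            ((if h : b ∈ D \ D₀ then ⟨(θ ⟨b, h⟩ : V), hSC (θ ⟨b, h⟩).2⟩ else ⟨ψ b, (hO b h).1⟩ : ↥C) : V)
            ↔ (Gf i).Adj a b
          by_cases h1 : a ∈ D \ D₀ <;> by_cases h2 : b ∈ D \ D₀
          · simp only [dif_pos h1, dif_pos h2]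
            have := θ.map_rel_iff (a := ⟨a, h1⟩) (b := ⟨b, h2⟩)
            simpa [comap_adj] using this
          · simp only [dif_pos h1, dif_neg h2]
            constructor
            · intro hadj
              exact absurd hadj.symm ((hO b h2).2.2 _ (θ ⟨a, h1⟩).2)
            · intro hadj
              exfalso
              rcases Decidable.em (b ∈ D) with hbD | hbD
              · exact h2 ⟨hbD, fun hc => h1.2 (hD₀adj b hc a hadj.symm)⟩
              · exact hbD (hCC a h1.1 b hadj.reachable)
          · simp only [dif_neg h1, dif_pos h2]
            constructor
            · intro hadj
              exact absurd hadj ((hO a h1).2.2 _ (θ ⟨b, h2⟩).2)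
            · intro hadj
              exfalso
              rcases Decidable.em (a ∈ D) with haD | haD
              · exact h1 ⟨haD, fun hc => h2.2 (hD₀adj a hc b hadj)⟩
              · exact haD (hCC b h2.1 a hadj.symm.reachable)
          · simp only [dif_neg h1, dif_neg h2]
            exact ψ.map_rel_iff }
      exact hCfree.false hΦ
    -- recurse
    have hssub : D \ D₀ ⊂ D := by
      refine ⟨Set.diff_subset, fun hc => ?_⟩
      have : k₀ ∈ D \ D₀ := hc (hD'sub (hD₀sub hk₀))
      exact this.2 hk₀
    have hcard' : (D \ D₀).ncard ≤ n := by
      have := Set.ncard_lt_ncard hssub (Set.toFinite D)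
      omega
    exact ih (D \ D₀) hcard'
      (fun x hx y hxy => ⟨hCC x hx.1 y hxy, fun hc =>
        hx.2 (hD₀CC y hc x hxy.symm)⟩)
      hDS' hO

end FfreeCore

theorem stmt10 {V : Type} [Fintype V] {ι : Type} [Fintype ι] {Fv : ι → Type}
    [∀ i, Fintype (Fv i)] (Gf : ∀ i, SimpleGraph (Fv i))
    (G : SimpleGraph V) (S T : Set V) (k : ℕ)
    (hS : S.Nonempty) (hT : T ⊆ Sᶜ)
    -- (a): no tight enrichment all of whose components are adjacent to `S`
    (ha : ¬ ∃ U : Set V, U ⊆ (S ∪ T)ᶜ ∧ TightEnrichment Gf G S U ∧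
        ∀ u ∈ U, ∃ u' : V, ReachIn G U u u' ∧ ∃ s ∈ S, G.Adj u' s)
    (P : Set V)
    -- (b): `P` is a minimum left-restricted `(S, T ∪ V(𝒰))`-separator of size `λ^L(S,T)`
    (hb : IsMinLeftSep G S
      (T ∪ ⋃₀ {U : Set V | U ⊆ (S ∪ T)ᶜ ∧ TightEnrichment Gf G S U ∧
        (G.induce U).Connected}) P)
    (hsize : (P.ncard : ℕ∞) = lamL G S T) :
    (∀ C : Set V, S ⊆ C → C ⊆ Tᶜ → (G.induce C).Connected →
      (∀ i, IsEmpty ((Gf i) ↪g (G.induce C))) → (openNbhd G C).ncard ≤ k →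
        (S ⊆ C ∪ reachSet G S P ∧ C ∪ reachSet G S P ⊆ Tᶜ ∧
         (G.induce (C ∪ reachSet G S P)).Connected ∧
         (∀ i, IsEmpty ((Gf i) ↪g (G.induce (C ∪ reachSet G S P)))) ∧
         (openNbhd G (C ∪ reachSet G S P)).ncard ≤ (openNbhd G C).ncard ∧
         (openNbhd G C).ncard ≤ k)) ∧
    (∀ C : Set V, SeclusionMaximal G (fun D =>
        (G.induce D).Connected ∧
        (∀ i, IsEmpty ((Gf i) ↪g (G.induce D))) ∧
        (openNbhd G D).ncard ≤ k ∧
        S ⊆ D ∧ D ⊆ Tᶜ) C → reachSet G S P ⊆ C) := by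
  classical
  set S' : Set V := reachSet G S P with hS'def
  obtain ⟨⟨hsep, hPS⟩, -⟩ := hb
  have hSS' : S ⊆ S' := subset_reachSet hPS
  -- S' avoids T
  have hS'T : ∀ x ∈ S', x ∉ T := by
    intro x hx hxT
    obtain ⟨s, hs, hr⟩ := hx
    have hxP : x ∉ P := hr.end_mem
    exact hsep s hs x ⟨Or.inl hxT, hxP⟩ hr
  -- S' avoids connected tight enrichments
  have hS'U : ∀ U' : Set V, U' ⊆ (S ∪ T)ᶜ → TightEnrichment Gf G S U' →
      (G.induce U').Connected → ∀ x ∈ U', x ∉ S' := by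
    intro U' h1 h2 h3 x hx hxS'
    obtain ⟨s, hs, hr⟩ := hxS'
    have hxP : x ∉ P := hr.end_mem
    exact hsep s hs x ⟨Or.inr ⟨U', ⟨h1, h2, h3⟩, hx⟩, hxP⟩ hr
  have main : ∀ C : Set V, S ⊆ C → C ⊆ Tᶜ → (G.induce C).Connected →
      (∀ i, IsEmpty ((Gf i) ↪g (G.induce C))) → (openNbhd G C).ncard ≤ k →
        (S ⊆ C ∪ S' ∧ C ∪ S' ⊆ Tᶜ ∧
         (G.induce (C ∪ S')).Connected ∧
         (∀ i, IsEmpty ((Gf i) ↪g (G.induce (C ∪ S')))) ∧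
         (openNbhd G (C ∪ S')).ncard ≤ (openNbhd G C).ncard ∧
         (openNbhd G C).ncard ≤ k) := by
    intro C hSC hCT hCconn hCfree hCk
    have hCS'T : C ∪ S' ⊆ Tᶜ := by
      rintro x (hx | hx)
      · exact hCT hx
      · exact hS'T x hx
    -- connectivity
    obtain ⟨s₀, hs₀⟩ := hS
    have hconn : (G.induce (C ∪ S')).Connected := by
      rw [connected_iff]
      refine ⟨?_, ⟨⟨s₀, Or.inl (hSC hs₀)⟩⟩⟩
      have hreach : ∀ (x : V) (hx : x ∈ C ∪ S'),
          (G.induce (C ∪ S')).Reachable ⟨x, hx⟩ ⟨s₀, Or.inl (hSC hs₀)⟩ := by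
        have hCcase : ∀ (x : V) (hx : x ∈ C),
            (G.induce (C ∪ S')).Reachable ⟨x, Or.inl hx⟩ ⟨s₀, Or.inl (hSC hs₀)⟩ := by
          intro x hx
          have := hCconn.preconnected ⟨x, hx⟩ ⟨s₀, hSC hs₀⟩
          have h2 := this.map (induceEmbMono (Set.subset_union_left : C ⊆ C ∪ S')).toHom
          exact h2
        intro x hx
        rcases id hx with hx' | hx'
        · exact hCcase x hx'
        · obtain ⟨s, hs, hr⟩ := id hx'
          obtain ⟨p, hp⟩ := id hr
          have hsupp : ∀ y ∈ p.support, y ∈ C ∪ S' := by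
            intro y hy
            exact Or.inr ⟨s, hs, ReachIn.of_mem_support hp hy⟩
          have h1 : (G.induce (C ∪ S')).Reachable ⟨s, Or.inl (hSC hs.1)⟩ ⟨x, hx⟩ :=
            induce_reachable_of_walk p hsupp _ _
          exact (h1.symm).trans (hCcase s (hSC hs.1))
      rintro ⟨x, hx⟩ ⟨y, hy⟩
      exact (hreach x hx).trans (hreach y hy).symm
    -- F-freeness
    have hfree : ∀ i, IsEmpty ((Gf i) ↪g (G.induce (C ∪ S'))) := by
      intro i
      by_contra hc
      obtain ⟨ψc⟩ := not_isEmpty_iff.mp hc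
      set ψ : (Gf i) ↪g G := (SimpleGraph.Embedding.induce (C ∪ S')).comp ψc with hψdef
      have hψmem : ∀ x, ψ x ∈ C ∪ S' := fun x => (ψc x).2
      have hunivS : IsEmpty ((Gf i).induce (Set.univ : Set (Fv i)) ↪g G.induce S) := by
        by_contra hcc
        obtain ⟨e⟩ := not_isEmpty_iff.mp hcc
        exact (hCfree i).false
          ((induceEmbMono hSC).comp (e.comp (induceUnivIso (Gf i)).symm.toEmbedding))
      exact ffree_ind Gf G S T C S' i hSC hCT hS'T hS'U ha (hCfree i) ψ hψmem
        (Set.univ).ncard Set.univ le_rfl (fun x _ y _ => Set.mem_univ y) hunivS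
        (fun x hx => absurd (Set.mem_univ x) hx)
    -- neighborhood size
    have hcount : (openNbhd G (C ∪ S')).ncard ≤ (openNbhd G C).ncard := by
      set A := openNbhd G C
      set B := openNbhd G S'
      set Q := openNbhd G (C ∪ S')
      set I := openNbhd G (C ∩ S')
      have hQAB : Q ⊆ A ∪ B := by
        rintro v ⟨hv, u, hu, hadj⟩
        rcases hu with hu | hu
        · exact Or.inl ⟨fun hc => hv (Or.inl hc), u, hu, hadj⟩
        · exact Or.inr ⟨fun hc => hv (Or.inr hc), u, hu, hadj⟩
      have hIAB : I ⊆ A ∪ B := by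
        rintro v ⟨hv, u, hu, hadj⟩
        by_cases hvC : v ∈ C
        · have hvS' : v ∉ S' := fun hc => hv ⟨hvC, hc⟩
          exact Or.inr ⟨hvS', u, hu.2, hadj⟩
        · exact Or.inl ⟨hvC, u, hu.1, hadj⟩
      have hQIAB : Q ∩ I ⊆ A ∩ B := by
        rintro v ⟨⟨hv, -⟩, ⟨-, u, hu, hadj⟩⟩
        exact ⟨⟨fun hc => hv (Or.inl hc), u, hu.1, hadj⟩,
          ⟨fun hc => hv (Or.inr hc), u, hu.2, hadj⟩⟩
      have hBP : B ⊆ P := openNbhd_reachSet_subset G S P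
      -- I is a left-restricted (S,T)-separator
      have hIsep : IsLeftSep G S T I := by
        refine openNbhd_isLeftSep (fun s hs => ⟨hSC hs, hSS' hs⟩) ?_
        intro x hx hxT
        exact (hCT hx.1) hxT
      have hPI : P.ncard ≤ I.ncard := by
        have h1 : lamL G S T ≤ (I.ncard : ℕ∞) := by
          calc lamL G S T ≤ ⨅ (_ : IsLeftSep G S T I), (I.ncard : ℕ∞) := iInf_le _ I
          _ ≤ (I.ncard : ℕ∞) := iInf_le _ hIsep
        rw [← hsize] at h1
        exact_mod_cast h1
      have hUI : (Q ∪ I).ncard + (Q ∩ I).ncard = Q.ncard + I.ncard :=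
        Set.ncard_union_add_ncard_inter Q I (Set.toFinite _) (Set.toFinite _)
      have hAB : (A ∪ B).ncard + (A ∩ B).ncard = A.ncard + B.ncard :=
        Set.ncard_union_add_ncard_inter A B (Set.toFinite _) (Set.toFinite _)
      have h1 : Q.ncard + I.ncard ≤ A.ncard + B.ncard := by
        rw [← hUI, ← hAB]
        have h2 : (Q ∪ I).ncard ≤ (A ∪ B).ncard :=
          Set.ncard_le_ncard (Set.union_subset hQAB hIAB) (Set.toFinite _)
        have h3 : (Q ∩ I).ncard ≤ (A ∩ B).ncard :=
          Set.ncard_le_ncard hQIAB (Set.toFinite _)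
        omega
      have hBI : B.ncard ≤ I.ncard :=
        le_trans (Set.ncard_le_ncard hBP (Set.toFinite _)) hPI
      omega
    exact ⟨hSC.trans Set.subset_union_left, hCS'T, hconn, hfree, hcount, hCk⟩
  refine ⟨main, ?_⟩
  intro C hmax
  obtain ⟨⟨hconn, hfree, hk, hSC, hCT⟩, hmaxi⟩ := hmax
  by_contra hc
  have hss : C ⊂ C ∪ S' := by
    refine ⟨Set.subset_union_left, fun hsub => ?_⟩
    exact hc (fun x hx => hsub (Or.inr hx))
  obtain ⟨h1, h2, h3, h4, h5, -⟩ := main C hSC hCT hconn hfree hk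
  have := hmaxi (C ∪ S') hss ⟨h3, h4, le_trans h5 hk, h1, h2⟩
  omega
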